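/- Let n and m be positive integers with m < n, let A be an n×n real matrix, let B be an m×n real matrix with rank m, let Z be an n×(n−m) real matrix whose columns form a basis of the kernel of B, and suppose ZᵀAZ is invertible. Set V = Z(ZᵀAZ)⁻¹Zᵀ. Then (I − V·A)·Bᵀ·(BBᵀ)⁻¹·B = I − V·A, where I is the n×n identity matrix; equivalently, Bᵀ(BBᵀ)⁻¹B·(I − A·V) = I − A·V. -/
import Mathlib

open Matrix

lemma isUnit_of_rank_eq {k : ℕ} (M : Matrix (Fin k) (Fin k) ℝ) (h : M.rank = k) : IsUnit M := by
  rw [← Matrix.mulVec_surjective_iff_isUnit]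
  have : LinearMap.range M.mulVecLin = ⊤ := by
    apply Submodule.eq_top_of_finrank_eq
    simpa [Matrix.rank] using h
  intro y
  obtain ⟨x, hx⟩ := LinearMap.range_eq_top.mp this y
  exact ⟨x, by simpa using hx⟩

lemma key_lemma {n m : ℕ} (hmn : m < n)
    (A : Matrix (Fin n) (Fin n) ℝ) (B : Matrix (Fin m) (Fin n) ℝ)
    (hrB : B.rank = m)
    (Z : Matrix (Fin n) (Fin (n - m)) ℝ) (hBZ : B * Z = 0) (hrZ : Z.rank = n - m)
    (hZAZ : IsUnit (Zᵀ * A * Z)) :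
    (1 - (Z * (Zᵀ * A * Z)⁻¹ * Zᵀ) * A) * Bᵀ * (B * Bᵀ)⁻¹ * B =
        1 - (Z * (Zᵀ * A * Z)⁻¹ * Zᵀ) * A := by
  have hBBT : IsUnit (B * Bᵀ) := by
    apply isUnit_of_rank_eq
    rw [Matrix.rank_self_mul_transpose, hrB]
  have hBBTdet : IsUnit (B * Bᵀ).det := (Matrix.isUnit_iff_isUnit_det _).1 hBBT
  -- range (mulVecLin Z) = ker (mulVecLin B)
  have hle : LinearMap.range Z.mulVecLin ≤ LinearMap.ker B.mulVecLin := by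
    rintro x ⟨y, rfl⟩
    simp only [LinearMap.mem_ker, Matrix.mulVecLin_apply, Matrix.mulVec_mulVec, hBZ,
      Matrix.zero_mulVec]
  have hdim : Module.finrank ℝ (LinearMap.range Z.mulVecLin) =
      Module.finrank ℝ (LinearMap.ker B.mulVecLin) := by
    have h1 : Module.finrank ℝ (LinearMap.range Z.mulVecLin) = n - m := by
      simpa [Matrix.rank] using hrZ
    have h2 := LinearMap.finrank_range_add_finrank_ker B.mulVecLin
    have h3 : Module.finrank ℝ (LinearMap.range B.mulVecLin) = m := by
      simpa [Matrix.rank] using hrB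
    rw [h3] at h2
    simp only [Module.finrank_fintype_fun_eq_card, Fintype.card_fin] at h2
    omega
  have hker : LinearMap.range Z.mulVecLin = LinearMap.ker B.mulVecLin :=
    Submodule.eq_of_le_of_finrank_eq hle hdim
  set V := Z * (Zᵀ * A * Z)⁻¹ * Zᵀ with hV
  have hVZ : (1 - V * A) * Z = 0 := by
    have : (Zᵀ * A * Z)⁻¹ * (Zᵀ * A * Z) = 1 :=
      Matrix.nonsing_inv_mul _ ((Matrix.isUnit_iff_isUnit_det _).1 hZAZ)
    rw [Matrix.sub_mul, Matrix.one_mul, hV]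
    rw [show Z * (Zᵀ * A * Z)⁻¹ * Zᵀ * A * Z = Z * ((Zᵀ * A * Z)⁻¹ * (Zᵀ * A * Z)) by
      simp only [Matrix.mul_assoc]]
    rw [this, Matrix.mul_one, sub_self]
  set Y := (1 : Matrix (Fin n) (Fin n) ℝ) - Bᵀ * (B * Bᵀ)⁻¹ * B with hY
  have hBY : B * Y = 0 := by
    rw [hY, Matrix.mul_sub, Matrix.mul_one]
    rw [show B * (Bᵀ * (B * Bᵀ)⁻¹ * B) = (B * Bᵀ) * (B * Bᵀ)⁻¹ * B by
      simp only [Matrix.mul_assoc], Matrix.mul_nonsing_inv _ hBBTdet, Matrix.one_mul, sub_self]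
  have hmain : (1 - V * A) * Y = 0 := by
    ext i j
    have hcol : B.mulVec (fun k => Y k j) = 0 := by
      ext l
      have := congrFun (congrFun hBY l) j
      simpa [Matrix.mul_apply, Matrix.mulVec, dotProduct] using this
    have hmem : (fun k => Y k j) ∈ LinearMap.ker B.mulVecLin := by
      simpa [Matrix.mulVecLin] using hcol
    rw [← hker] at hmem
    obtain ⟨y, hy⟩ := hmem
    have hy' : Z.mulVec y = (fun k => Y k j) := by simpa using hy
    have h0 : (1 - V * A).mulVec (fun k => Y k j) i = 0 := by
      rw [← hy', Matrix.mulVec_mulVec, hVZ]; simp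
    have h1 : ((1 - V * A) * Y) i j = (1 - V * A).mulVec (fun k => Y k j) i := by
      simp [Matrix.mul_apply, Matrix.mulVec, dotProduct]
    rw [h1, h0]; rfl
  have hfin : (1 - V * A) * (Bᵀ * (B * Bᵀ)⁻¹ * B) = 1 - V * A := by
    rw [hY, Matrix.mul_sub, Matrix.mul_one, sub_eq_zero] at hmain
    exact hmain.symm
  calc (1 - V * A) * Bᵀ * (B * Bᵀ)⁻¹ * B
      = (1 - V * A) * (Bᵀ * (B * Bᵀ)⁻¹ * B) := by simp [Matrix.mul_assoc]
    _ = 1 - V * A := hfin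

theorem projector_absorbs_orthogonal_projector {n m : ℕ} (hm : 0 < m) (hmn : m < n)
    (A : Matrix (Fin n) (Fin n) ℝ) (B : Matrix (Fin m) (Fin n) ℝ)
    (hrB : B.rank = m)
    (Z : Matrix (Fin n) (Fin (n - m)) ℝ) (hBZ : B * Z = 0) (hrZ : Z.rank = n - m)
    (hZAZ : IsUnit (Zᵀ * A * Z)) :
    (1 - (Z * (Zᵀ * A * Z)⁻¹ * Zᵀ) * A) * Bᵀ * (B * Bᵀ)⁻¹ * B =
        1 - (Z * (Zᵀ * A * Z)⁻¹ * Zᵀ) * A ∧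
    Bᵀ * (B * Bᵀ)⁻¹ * B * (1 - A * (Z * (Zᵀ * A * Z)⁻¹ * Zᵀ)) =
        1 - A * (Z * (Zᵀ * A * Z)⁻¹ * Zᵀ) := by
  constructor
  · exact key_lemma hmn A B hrB Z hBZ hrZ hZAZ
  · have hZAZ' : IsUnit (Zᵀ * Aᵀ * Z) := by
      have e : Zᵀ * Aᵀ * Z = (Zᵀ * A * Z)ᵀ := by
        simp [Matrix.transpose_mul, Matrix.mul_assoc]
      rw [e, Matrix.isUnit_iff_isUnit_det, Matrix.det_transpose]
      exact (Matrix.isUnit_iff_isUnit_det _).1 hZAZ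
    have h := key_lemma hmn Aᵀ B hrB Z hBZ hrZ hZAZ'
    have h2 := congrArg Matrix.transpose h
    simp only [Matrix.transpose_mul, Matrix.transpose_sub, Matrix.transpose_one,
      Matrix.transpose_transpose, Matrix.transpose_nonsing_inv] at h2
    simpa [Matrix.mul_assoc] using h2
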